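/- Let G and H be real Hilbert spaces and L, C : G → H bounded linear operators such that C is compact and L − λ̂C is invertible for some λ̂ ∈ ℝ. Let λ ∈ ℝ and suppose Im(L − λC) ∩ C(Ker(L − λC)) = {0}. Then H = Im(L − λC) ⊕ C(Ker(L − λC)); that is, Im(L − λC) + C(Ker(L − λC)) = H and the two subspaces intersect only in 0. -/

import Mathlib

open Metric Module

open LinearMap Submodule Module

lemma key_alg {E : Type*} [AddCommGroup E] [Module ℝ E]
    (f : E →ₗ[ℝ] E) [FiniteDimensional ℝ (LinearMap.range f)] :
    ∃ V : Submodule ℝ E, IsCompl (LinearMap.range (LinearMap.id + f)) V ∧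
      FiniteDimensional ℝ V ∧
      Module.finrank ℝ V = Module.finrank ℝ (LinearMap.ker (LinearMap.id + f)) := by
  set T : E →ₗ[ℝ] E := LinearMap.id + f with hT
  set W : Submodule ℝ E := LinearMap.range f with hW
  have hTapp : ∀ x, T x = x + f x := fun x => rfl
  have hker : LinearMap.ker T ≤ W := by
    intro x hx
    rw [LinearMap.mem_ker, hTapp] at hx
    have hx' : x = -f x := by rw [eq_neg_iff_add_eq_zero]; exact hx
    rw [hx']
    exact W.neg_mem (LinearMap.mem_range_self f x)
  have hWinv : ∀ x ∈ W, T x ∈ W := by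
    intro x hx
    rw [hTapp]
    exact W.add_mem hx (LinearMap.mem_range_self f x)
  set g : W →ₗ[ℝ] W := T.restrict hWinv with hg
  have hgapp : ∀ x : W, (g x : E) = T x := fun x => rfl
  -- ker T = map subtype (ker g)
  have hkermap : Submodule.map W.subtype (LinearMap.ker g) = LinearMap.ker T := by
    ext x
    simp only [Submodule.mem_map, LinearMap.mem_ker]
    constructor
    · rintro ⟨⟨y, hy⟩, hgy, rfl⟩
      have := congrArg (W.subtype) hgy
      simpa [hgapp] using this
    · intro hx
      refine ⟨⟨x, hker hx⟩, ?_, rfl⟩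
      apply Subtype.ext
      simpa [hgapp] using hx
  -- range T ⊓ W = map subtype (range g)
  have hrangemap : Submodule.map W.subtype (LinearMap.range g) = LinearMap.range T ⊓ W := by
    ext x
    simp only [Submodule.mem_map, LinearMap.mem_range, Submodule.mem_inf]
    constructor
    · rintro ⟨y, ⟨z, hz⟩, rfl⟩
      exact ⟨⟨z, by rw [← hgapp, hz]; rfl⟩, y.2⟩
    · rintro ⟨⟨z, hz⟩, hxW⟩
      have hzW : z ∈ W := by
        have : z = T z - f z := by rw [hTapp]; abel
        rw [this]
        exact W.sub_mem (hz ▸ hxW) (LinearMap.mem_range_self f z)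
      exact ⟨⟨x, hxW⟩, ⟨⟨z, hzW⟩, Subtype.ext (by simpa [hgapp] using hz)⟩, rfl⟩
  -- range T ⊔ W = ⊤
  have hsup : LinearMap.range T ⊔ W = ⊤ := by
    rw [eq_top_iff]
    intro x _
    have : x = T x - f x := by rw [hTapp]; abel
    rw [this]
    exact Submodule.sub_mem _ (Submodule.mem_sup_left (LinearMap.mem_range_self T x))
      (Submodule.mem_sup_right (LinearMap.mem_range_self f x))
  obtain ⟨q, hq⟩ := Submodule.exists_isCompl (LinearMap.range g)
  refine ⟨Submodule.map W.subtype q, ⟨?_, ?_⟩, ?_, ?_⟩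
  · -- disjoint
    rw [disjoint_iff]
    have hle : Submodule.map W.subtype q ≤ W := Submodule.map_subtype_le W q
    have : LinearMap.range T ⊓ Submodule.map W.subtype q
        = (LinearMap.range T ⊓ W) ⊓ Submodule.map W.subtype q := by
      rw [inf_assoc, inf_eq_right.2 hle]
    rw [this, ← hrangemap, ← Submodule.map_inf _ W.injective_subtype,
      (disjoint_iff.1 hq.disjoint), Submodule.map_bot]
  · -- codisjoint
    rw [codisjoint_iff]
    have h1 : Submodule.map W.subtype (LinearMap.range g) ≤ LinearMap.range T :=
      hrangemap.le.trans inf_le_left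
    calc LinearMap.range T ⊔ Submodule.map W.subtype q
        = LinearMap.range T ⊔ (Submodule.map W.subtype (LinearMap.range g)
            ⊔ Submodule.map W.subtype q) := by
          rw [← sup_assoc, sup_eq_left.2 h1]
      _ = LinearMap.range T ⊔ W := by
          rw [← Submodule.map_sup, codisjoint_iff.1 hq.codisjoint, Submodule.map_top,
            Submodule.range_subtype]
      _ = ⊤ := hsup
  · -- finite dimensional
    exact (Submodule.equivMapOfInjective W.subtype W.injective_subtype q).finiteDimensional
  · -- finrank
    have h1 : Module.finrank ℝ (LinearMap.range g) + Module.finrank ℝ q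
        = Module.finrank ℝ W := Submodule.finrank_add_eq_of_isCompl hq
    have h2 : Module.finrank ℝ (LinearMap.range g) + Module.finrank ℝ (LinearMap.ker g)
        = Module.finrank ℝ W := LinearMap.finrank_range_add_finrank_ker g
    have h3 : Module.finrank ℝ q = Module.finrank ℝ (LinearMap.ker g) := by omega
    rw [Submodule.finrank_map_subtype_eq, h3, ← hkermap, Submodule.finrank_map_subtype_eq]

open Metric Module

lemma approx {G H : Type*} [NormedAddCommGroup G] [NormedSpace ℝ G]
    [NormedAddCommGroup H] [InnerProductSpace ℝ H] [CompleteSpace H]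
    (K : G →L[ℝ] H) (hK : IsCompactOperator ⇑K) {ε : ℝ} (hε : 0 < ε) :
    ∃ F : G →L[ℝ] H, FiniteDimensional ℝ (LinearMap.range (F : G →ₗ[ℝ] H)) ∧ ‖K - F‖ ≤ ε := by
  obtain ⟨M, hMc, hM⟩ := hK.image_closedBall_subset_compact 1
  obtain ⟨t, -, htfin, hcover⟩ := hMc.finite_cover_balls (e := ε) hε
  set V : Submodule ℝ H := Submodule.span ℝ t with hV
  have : FiniteDimensional ℝ V := FiniteDimensional.span_of_finite ℝ htfin
  set F : G →L[ℝ] H := V.subtypeL.comp ((orthogonalProjection V).comp K) with hF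
  have hFr : LinearMap.range (F : G →ₗ[ℝ] H) ≤ V := by
    rintro x ⟨y, rfl⟩
    exact (orthogonalProjection V (K y)).2
  refine ⟨F, Submodule.finiteDimensional_of_le hFr, ?_⟩
  apply ContinuousLinearMap.opNorm_le_of_unit_norm hε.le
  intro x hx
  have hxM : K x ∈ M := hM ⟨x, by simp [hx], rfl⟩
  obtain ⟨y, hyt, hy⟩ : ∃ y ∈ t, K x ∈ ball y ε := by
    simpa using hcover hxM
  have hyV : y ∈ V := Submodule.subset_span hyt
  have hmin : ‖K x - orthogonalProjection V (K x)‖ ≤ ‖K x - y‖ := by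
    have := starProjection_minimal (U := V) (K x)
    rw [starProjection_apply] at this
    rw [this]
    exact ciInf_le_of_le ⟨0, fun b => by rintro ⟨v, rfl⟩; positivity⟩ ⟨y, hyV⟩ le_rfl
  have : ‖(K - F) x‖ = ‖K x - orthogonalProjection V (K x)‖ := rfl
  rw [this]
  exact hmin.trans (by rw [← dist_eq_norm]; exact (mem_ball.mp hy).le)

theorem range_plus_C_kernel_spans
    (G H : Type*) [NormedAddCommGroup G] [InnerProductSpace ℝ G] [CompleteSpace G]
    [NormedAddCommGroup H] [InnerProductSpace ℝ H] [CompleteSpace H]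
    (L C : G →L[ℝ] H)
    (hC : IsCompactOperator ⇑C)
    (hinv : ∃ lamHat : ℝ, ∃ e : G ≃L[ℝ] H, ∀ x, e x = L x - lamHat • C x)
    (lam : ℝ)
    (htrans : LinearMap.range ((L - lam • C : G →L[ℝ] H) : G →ₗ[ℝ] H) ⊓
        Submodule.map (C : G →ₗ[ℝ] H) (LinearMap.ker ((L - lam • C : G →L[ℝ] H) : G →ₗ[ℝ] H)) = ⊥) :
    LinearMap.range ((L - lam • C : G →L[ℝ] H) : G →ₗ[ℝ] H) ⊔
        Submodule.map (C : G →ₗ[ℝ] H) (LinearMap.ker ((L - lam • C : G →L[ℝ] H) : G →ₗ[ℝ] H)) = ⊤ ∧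
      LinearMap.range ((L - lam • C : G →L[ℝ] H) : G →ₗ[ℝ] H) ⊓
        Submodule.map (C : G →ₗ[ℝ] H) (LinearMap.ker ((L - lam • C : G →L[ℝ] H) : G →ₗ[ℝ] H)) = ⊥ := by
  refine ⟨?_, htrans⟩
  obtain ⟨lamHat, e, he⟩ := hinv
  set T : G →L[ℝ] H := L - lam • C with hTdef
  -- the compact operator K on G
  set K : G →L[ℝ] G := (lamHat - lam) • ((e.symm : H →L[ℝ] G).comp C) with hKdef
  have hKcomp : IsCompactOperator ⇑K := by
    have h1 : IsCompactOperator (⇑(e.symm : H →L[ℝ] G) ∘ ⇑C) := hC.clm_comp _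
    have h2 := h1.smul (lamHat - lam)
    exact h2
  obtain ⟨F, hFfin, hFle⟩ := approx K hKcomp (ε := 1/2) (by norm_num)
  set S : G →L[ℝ] G := K - F with hSdef
  have hSnorm : ‖-S‖ < 1 := by
    rw [norm_neg]
    exact lt_of_le_of_lt hFle (by norm_num)
  set u : (G →L[ℝ] G)ˣ := Units.oneSub (-S) hSnorm with hudef
  have hu : (u : G →L[ℝ] G) = 1 + S := by
    show (1 : G →L[ℝ] G) - (-S) = 1 + S
    rw [sub_neg_eq_add]
  set F' : G →L[ℝ] G := (↑u⁻¹ : G →L[ℝ] G) * F with hF'def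
  have hfact : (1 : G →L[ℝ] G) + K = (u : G →L[ℝ] G) * (1 + F') := by
    rw [hF'def, mul_add, mul_one, ← mul_assoc, u.mul_inv, one_mul, hu]
    rw [hSdef]
    abel
  -- T = e ∘ (1 + K)
  have hTK : ∀ x, T x = e ((1 + K) x) := by
    intro x
    have : (1 + K) x = x + (lamHat - lam) • (e.symm (C x)) := rfl
    rw [this, map_add, map_smul, e.apply_symm_apply, he x, hTdef]
    show L x - lam • C x = L x - lamHat • C x + (lamHat - lam) • C x
    rw [sub_smul]
    abel
  -- linear equivalence A = e ∘ u
  set uE : G ≃L[ℝ] G := ContinuousLinearEquiv.ofUnit u with huE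
  set A : G ≃ₗ[ℝ] H := uE.toLinearEquiv.trans e.toLinearEquiv with hA
  have hAapp : ∀ x, A x = e ((u : G →L[ℝ] G) x) := fun x => rfl
  set T₀ : G →ₗ[ℝ] G := LinearMap.id + (F' : G →ₗ[ℝ] G) with hT₀
  have hT₀app : ∀ x, T₀ x = x + F' x := fun x => rfl
  have hTlin : (T : G →ₗ[ℝ] H) = (A : G →ₗ[ℝ] H).comp T₀ := by
    ext x
    show T x = A (T₀ x)
    rw [hTK x, hAapp]
    congr 1
    have h1 : T₀ x = (1 + F') x := rfl
    rw [h1, ← ContinuousLinearMap.mul_apply, ← hfact]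
  -- finite dimensionality of range F'
  have hF'fin : FiniteDimensional ℝ (LinearMap.range (F' : G →ₗ[ℝ] G)) := by
    have heq : LinearMap.range (F' : G →ₗ[ℝ] G) =
        Submodule.map (↑(↑u⁻¹ : G →L[ℝ] G) : G →ₗ[ℝ] G) (LinearMap.range (F : G →ₗ[ℝ] G)) := by
      ext x
      constructor
      · rintro ⟨y, rfl⟩
        exact ⟨F y, ⟨y, rfl⟩, rfl⟩
      · rintro ⟨z, ⟨y, rfl⟩, rfl⟩
        exact ⟨y, rfl⟩
    rw [heq]
    exact Module.Finite.map _ _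
  obtain ⟨V₀, hcompl₀, hfin₀, hrank₀⟩ := key_alg (F' : G →ₗ[ℝ] G)
  -- transport along A
  have hrange : LinearMap.range (T : G →ₗ[ℝ] H)
      = Submodule.map (A : G →ₗ[ℝ] H) (LinearMap.range T₀) := by
    rw [hTlin, LinearMap.range_comp]
  have hker : LinearMap.ker (T : G →ₗ[ℝ] H) = LinearMap.ker T₀ := by
    rw [hTlin, LinearMap.ker_comp, LinearMap.ker_eq_bot'.2, Submodule.comap_bot]
    intro x hx
    exact A.injective (by simpa using hx)
  set RT : Submodule ℝ H := LinearMap.range (T : G →ₗ[ℝ] H) with hRT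
  set kT : Submodule ℝ G := LinearMap.ker (T : G →ₗ[ℝ] H) with hkT
  set V : Submodule ℝ H := Submodule.map (A : G →ₗ[ℝ] H) V₀ with hVdef
  have hcompl : IsCompl RT V := by
    have h := (Submodule.orderIsoMapComap A).isCompl hcompl₀
    rw [Submodule.orderIsoMapComap_apply, Submodule.orderIsoMapComap_apply] at h
    rw [hrange]
    exact h
  haveI hfinV : FiniteDimensional ℝ V := Module.Finite.map V₀ (A : G →ₗ[ℝ] H)
  have hrankV : Module.finrank ℝ V = Module.finrank ℝ kT := by
    rw [hVdef, A.finrank_map_eq, hrank₀, hker, hT₀]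
  haveI hfinkT : FiniteDimensional ℝ kT := by
    have hle : LinearMap.ker T₀ ≤ LinearMap.range (F' : G →ₗ[ℝ] G) := by
      intro x hx
      have hx' : x + F' x = 0 := hx
      have : x = F' (-x) := by rw [map_neg]; rw [eq_neg_iff_add_eq_zero]; exact hx'
      exact ⟨-x, this.symm⟩
    rw [hker]
    exact Submodule.finiteDimensional_of_le hle
  -- C is injective on ker T
  have hCinj : ∀ x ∈ kT, C x = 0 → x = 0 := by
    intro x hx hCx
    have hTx : L x - lam • C x = 0 := hx
    rw [hCx, smul_zero, sub_zero] at hTx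
    have hex : e x = 0 := by rw [he x, hTx, hCx, smul_zero, sub_zero]
    have : e x = e 0 := by rw [hex, map_zero]
    exact e.injective this
  set CK : Submodule ℝ H := Submodule.map (C : G →ₗ[ℝ] H) kT with hCK
  set c : kT →ₗ[ℝ] H := (C : G →ₗ[ℝ] H).domRestrict kT with hc
  have hkerc : LinearMap.ker c = ⊥ := by
    rw [LinearMap.ker_eq_bot']
    intro z hz
    exact Subtype.ext (hCinj z z.2 hz)
  have hrangec : LinearMap.range c = CK := LinearMap.range_domRestrict kT (C : G →ₗ[ℝ] H)
  have hrankCK : Module.finrank ℝ CK = Module.finrank ℝ kT := by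
    have h1 := LinearMap.finrank_range_add_finrank_ker c
    rw [hkerc, finrank_bot, add_zero, hrangec] at h1
    exact h1
  haveI hfinCK : FiniteDimensional ℝ CK := by
    rw [← hrangec]
    exact Module.Finite.range c
  set q : H →ₗ[ℝ] V := V.linearProjOfIsCompl RT hcompl.symm with hq
  have hqker : LinearMap.ker q = RT := Submodule.linearProjOfIsCompl_ker hcompl.symm
  have hqmem : ∀ x : H, x - ↑(q x) ∈ RT := by
    intro x
    rw [← hqker, LinearMap.mem_ker, map_sub]
    erw [Submodule.linearProjOfIsCompl_apply_left hcompl.symm (q x), sub_self]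
  set m : CK →ₗ[ℝ] V := q.comp CK.subtype with hm
  have hkerm : LinearMap.ker m = ⊥ := by
    rw [LinearMap.ker_eq_bot']
    intro z hz
    have h1 : (z : H) ∈ RT := by rw [← hqker]; exact hz
    have h2 : (z : H) ∈ RT ⊓ CK := ⟨h1, z.2⟩
    have h3 : RT ⊓ CK = ⊥ := htrans
    rw [h3, Submodule.mem_bot] at h2
    exact Subtype.ext h2
  have hrangem : LinearMap.range m = ⊤ := by
    apply Submodule.eq_top_of_finrank_eq
    have h1 := LinearMap.finrank_range_add_finrank_ker m
    rw [hkerm, finrank_bot, add_zero, hrankCK] at h1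
    rw [h1, hrankV]
  have hVle : V ≤ RT ⊔ CK := by
    intro v hv
    have hmem : (⟨v, hv⟩ : V) ∈ LinearMap.range m := by rw [hrangem]; trivial
    obtain ⟨z, hz⟩ := hmem
    have hval : (↑(q ↑z) : H) = v := congrArg Subtype.val hz
    have h1 : (↑z : H) - ↑(q ↑z) ∈ RT := hqmem ↑z
    have h2 : (↑z : H) ∈ CK := z.2
    have hv' : v = ↑z - ((↑z : H) - ↑(q ↑z)) := by rw [hval, sub_sub_cancel]
    rw [hv']
    exact Submodule.sub_mem _ (Submodule.mem_sup_right h2) (Submodule.mem_sup_left h1)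
  show RT ⊔ CK = ⊤
  have hfinal : RT ⊔ V ≤ RT ⊔ CK := sup_le le_sup_left hVle
  rw [codisjoint_iff.1 hcompl.codisjoint] at hfinal
  exact le_antisymm le_top hfinal
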